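/- Symmetric periodic orbit criterion: under the CR3BP reflection symmetry and uniqueness of solutions, if a trajectory has perpendicular crossings of the xz-plane at t = 0 and at t = T/2 (i.e., y = u = w = 0 at both times), then the trajectory is T-periodic: X(t+T) = X(t) for all t. -/

import Mathlib

noncomputable def r1 (μ x y z : ℝ) : ℝ := Real.sqrt ((x + μ)^2 + y^2 + z^2)
noncomputable def r2 (μ x y z : ℝ) : ℝ := Real.sqrt ((x + μ - 1)^2 + y^2 + z^2)

/-- A solution of the CR3BP equations of motion in the rotating frame. -/
def IsCRSol (μ : ℝ) (x y z u v w : ℝ → ℝ) : Prop :=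
  ∀ t : ℝ,
    HasDerivAt x (u t) t ∧ HasDerivAt y (v t) t ∧ HasDerivAt z (w t) t ∧
    HasDerivAt u (x t + 2 * v t
        - (1 - μ) * (x t + μ) / (r1 μ (x t) (y t) (z t))^3
        - μ * (x t + μ - 1) / (r2 μ (x t) (y t) (z t))^3) t ∧
    HasDerivAt v (y t - 2 * u t
        - (1 - μ) * y t / (r1 μ (x t) (y t) (z t))^3
        - μ * y t / (r2 μ (x t) (y t) (z t))^3) t ∧
    HasDerivAt w (-(1 - μ) * z t / (r1 μ (x t) (y t) (z t))^3
        - μ * z t / (r2 μ (x t) (y t) (z t))^3) t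

section Aux

abbrev E6 : Type := ℝ × ℝ × ℝ × ℝ × ℝ × ℝ

/-- The CR3BP vector field on phase space. -/
noncomputable def Fvec (μ : ℝ) (p : E6) : E6 :=
  (p.2.2.2.1, p.2.2.2.2.1, p.2.2.2.2.2,
   p.1 + 2 * p.2.2.2.2.1
     - (1 - μ) * (p.1 + μ) / (r1 μ p.1 p.2.1 p.2.2.1)^3
     - μ * (p.1 + μ - 1) / (r2 μ p.1 p.2.1 p.2.2.1)^3,
   p.2.1 - 2 * p.2.2.2.1
     - (1 - μ) * p.2.1 / (r1 μ p.1 p.2.1 p.2.2.1)^3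
     - μ * p.2.1 / (r2 μ p.1 p.2.1 p.2.2.1)^3,
   -(1 - μ) * p.2.2.1 / (r1 μ p.1 p.2.1 p.2.2.1)^3
     - μ * p.2.2.1 / (r2 μ p.1 p.2.1 p.2.2.1)^3)

lemma contDiffAt_Fvec (μ : ℝ) (p : E6)
    (h1 : 0 < r1 μ p.1 p.2.1 p.2.2.1) (h2 : 0 < r2 μ p.1 p.2.1 p.2.2.1) :
    ContDiffAt ℝ 1 (Fvec μ) p := by
  have hx : ContDiff ℝ 1 (fun q : E6 => q.1) := contDiff_fst
  have hy : ContDiff ℝ 1 (fun q : E6 => q.2.1) := contDiff_fst.comp contDiff_snd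
  have hz : ContDiff ℝ 1 (fun q : E6 => q.2.2.1) :=
    contDiff_fst.comp (contDiff_snd.comp contDiff_snd)
  have hu : ContDiff ℝ 1 (fun q : E6 => q.2.2.2.1) :=
    contDiff_fst.comp (contDiff_snd.comp (contDiff_snd.comp contDiff_snd))
  have hv : ContDiff ℝ 1 (fun q : E6 => q.2.2.2.2.1) :=
    contDiff_fst.comp (contDiff_snd.comp (contDiff_snd.comp (contDiff_snd.comp contDiff_snd)))
  have hw : ContDiff ℝ 1 (fun q : E6 => q.2.2.2.2.2) :=
    contDiff_snd.comp (contDiff_snd.comp (contDiff_snd.comp (contDiff_snd.comp contDiff_snd)))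
  have hq1 : ContDiff ℝ 1 (fun q : E6 => (q.1 + μ)^2 + q.2.1^2 + q.2.2.1^2) :=
    (((hx.add contDiff_const).pow 2).add (hy.pow 2)).add (hz.pow 2)
  have hq2 : ContDiff ℝ 1 (fun q : E6 => (q.1 + μ - 1)^2 + q.2.1^2 + q.2.2.1^2) :=
    ((((hx.add contDiff_const).sub contDiff_const).pow 2).add (hy.pow 2)).add (hz.pow 2)
  have hq1ne : (p.1 + μ)^2 + p.2.1^2 + p.2.2.1^2 ≠ 0 := by
    intro h
    rw [r1, h, Real.sqrt_zero] at h1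
    exact lt_irrefl _ h1
  have hq2ne : (p.1 + μ - 1)^2 + p.2.1^2 + p.2.2.1^2 ≠ 0 := by
    intro h
    rw [r2, h, Real.sqrt_zero] at h2
    exact lt_irrefl _ h2
  have hr1 : ContDiffAt ℝ 1 (fun q : E6 => r1 μ q.1 q.2.1 q.2.2.1) p := by
    simp only [r1]
    exact (Real.contDiffAt_sqrt hq1ne).comp p hq1.contDiffAt
  have hr2 : ContDiffAt ℝ 1 (fun q : E6 => r2 μ q.1 q.2.1 q.2.2.1) p := by
    simp only [r2]
    exact (Real.contDiffAt_sqrt hq2ne).comp p hq2.contDiffAt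
  have hr13 : ContDiffAt ℝ 1 (fun q : E6 => (r1 μ q.1 q.2.1 q.2.2.1)^3) p := hr1.pow 3
  have hr23 : ContDiffAt ℝ 1 (fun q : E6 => (r2 μ q.1 q.2.1 q.2.2.1)^3) p := hr2.pow 3
  have hr13ne : (r1 μ p.1 p.2.1 p.2.2.1)^3 ≠ 0 := by positivity
  have hr23ne : (r2 μ p.1 p.2.1 p.2.2.1)^3 ≠ 0 := by positivity
  refine ContDiffAt.prodMk hu.contDiffAt (ContDiffAt.prodMk hv.contDiffAt (ContDiffAt.prodMk
    hw.contDiffAt (ContDiffAt.prodMk ?_ (ContDiffAt.prodMk ?_ ?_))))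
  · exact (((hx.contDiffAt.add ((contDiff_const.mul hv).contDiffAt)).sub
      (((contDiff_const.mul (hx.add contDiff_const)).contDiffAt).div hr13 hr13ne)).sub
      (((contDiff_const.mul ((hx.add contDiff_const).sub contDiff_const)).contDiffAt).div
        hr23 hr23ne))
  · exact (((hy.contDiffAt.sub ((contDiff_const.mul hu).contDiffAt)).sub
      (((contDiff_const.mul hy).contDiffAt).div hr13 hr13ne)).sub
      (((contDiff_const.mul hy).contDiffAt).div hr23 hr23ne))
  · exact ((((contDiff_const.mul hz).contDiffAt).div hr13 hr13ne).sub
      (((contDiff_const.mul hz).contDiffAt).div hr23 hr23ne))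

/-- Uniqueness of solutions of an autonomous ODE with `C¹` field along the first trajectory. -/
lemma ODE_uniq {F : E6 → E6} {f g : ℝ → E6}
    (hf : ∀ t, HasDerivAt f (F (f t)) t)
    (hg : ∀ t, HasDerivAt g (F (g t)) t)
    (hF : ∀ t, ContDiffAt ℝ 1 F (f t))
    {t₀ : ℝ} (heq : f t₀ = g t₀) : ∀ t, f t = g t := by
  have hfc : Continuous f := continuous_iff_continuousAt.mpr fun t => (hf t).continuousAt
  have hgc : Continuous g := continuous_iff_continuousAt.mpr fun t => (hg t).continuousAt
  set A : Set ℝ := {t | f t = g t} with hA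
  have hclosed : IsClosed A := isClosed_eq hfc hgc
  have hopen : IsOpen A := by
    rw [isOpen_iff_mem_nhds]
    intro t₁ ht₁
    have ht₁' : f t₁ = g t₁ := ht₁
    obtain ⟨K, S, hS, hlip⟩ := (hF t₁).exists_lipschitzOnWith
    have hfS : ∀ᶠ t in nhds t₁, HasDerivAt f (F (f t)) t ∧ f t ∈ S := by
      filter_upwards [hfc.continuousAt.preimage_mem_nhds hS] with t ht
      exact ⟨hf t, ht⟩
    have hgS : ∀ᶠ t in nhds t₁, HasDerivAt g (F (g t)) t ∧ g t ∈ S := by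
      have hS' : S ∈ nhds (g t₁) := by rw [← ht₁']; exact hS
      filter_upwards [hgc.continuousAt.preimage_mem_nhds hS'] with t ht
      exact ⟨hg t, ht⟩
    exact ODE_solution_unique_of_eventually
      (v := fun _ : ℝ => F) (s := fun _ : ℝ => S) (Filter.Eventually.of_forall fun _ => hlip) hfS hgS ht₁'
  have huniv : A = Set.univ := IsClopen.eq_univ ⟨hclosed, hopen⟩ ⟨t₀, heq⟩
  intro t
  have ht : t ∈ A := huniv ▸ Set.mem_univ t
  exact ht

lemma r1_neg (μ x y z : ℝ) : r1 μ x (-y) z = r1 μ x y z := by simp [r1, neg_sq]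
lemma r2_neg (μ x y z : ℝ) : r2 μ x (-y) z = r2 μ x y z := by simp [r2, neg_sq]

/-- The reflected, time-reversed trajectory is again a solution. -/
lemma reflected_sol {μ : ℝ} {x y z u v w : ℝ → ℝ} (hsol : IsCRSol μ x y z u v w) (c : ℝ) :
    IsCRSol μ (fun t => x (c - t)) (fun t => -y (c - t)) (fun t => z (c - t))
      (fun t => -u (c - t)) (fun t => v (c - t)) (fun t => -w (c - t)) := by
  intro t
  have hct : HasDerivAt (fun t : ℝ => c - t) (-1) t := by
    simpa using (hasDerivAt_id t).const_sub c
  obtain ⟨hx, hy, hz, hu, hv, hw⟩ := hsol (c - t)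
  refine ⟨?_, ?_, ?_, ?_, ?_, ?_⟩
  · have := hx.comp t hct
    simp only [Function.comp_def] at this
    refine this.congr_deriv ?_
    ring
  · have := (hy.comp t hct).neg
    simp only [Function.comp_def] at this
    refine this.congr_deriv ?_
    ring
  · have := hz.comp t hct
    simp only [Function.comp_def] at this
    refine this.congr_deriv ?_
    ring
  · have := (hu.comp t hct).neg
    simp only [Function.comp_def] at this
    simp only [r1_neg, r2_neg]
    refine this.congr_deriv ?_
    ring
  · have := hv.comp t hct
    simp only [Function.comp_def] at this
    simp only [r1_neg, r2_neg]
    refine this.congr_deriv ?_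
    ring
  · have := (hw.comp t hct).neg
    simp only [Function.comp_def] at this
    simp only [r1_neg, r2_neg]
    refine this.congr_deriv ?_
    ring

/-- An `IsCRSol` packaged as a solution of the vector ODE. -/
lemma vec_sol {μ : ℝ} {x y z u v w : ℝ → ℝ} (hsol : IsCRSol μ x y z u v w) :
    ∀ t, HasDerivAt (fun t => ((x t, y t, z t, u t, v t, w t) : E6))
      (Fvec μ (x t, y t, z t, u t, v t, w t)) t := by
  intro t
  obtain ⟨hx, hy, hz, hu, hv, hw⟩ := hsol t
  exact hx.prodMk (hy.prodMk (hz.prodMk (hu.prodMk (hv.prodMk hw))))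

end Aux

/-- Symmetric periodic orbit criterion: a CR3BP trajectory with perpendicular crossings of the
`xz`-plane (`y = u = w = 0`) at `t = 0` and `t = T/2` is `T`-periodic. -/
theorem two_perpendicular_crossings_periodic (μ : ℝ) (hμ : μ ∈ Set.Ioo (0:ℝ) 1)
    (x y z u v w : ℝ → ℝ) (hsol : IsCRSol μ x y z u v w)
    (hr1 : ∀ t, 0 < r1 μ (x t) (y t) (z t))
    (hr2 : ∀ t, 0 < r2 μ (x t) (y t) (z t))
    (T : ℝ) (hT : 0 < T)
    (hy0 : y 0 = 0) (hu0 : u 0 = 0) (hw0 : w 0 = 0)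
    (hyh : y (T / 2) = 0) (huh : u (T / 2) = 0) (hwh : w (T / 2) = 0) :
    ∀ t : ℝ, x (t + T) = x t ∧ y (t + T) = y t ∧ z (t + T) = z t ∧
      u (t + T) = u t ∧ v (t + T) = v t ∧ w (t + T) = w t := by
  have hX := vec_sol hsol
  have hFX : ∀ t, ContDiffAt ℝ 1 (Fvec μ)
      ((x t, y t, z t, u t, v t, w t) : E6) :=
    fun t => contDiffAt_Fvec μ (x t, y t, z t, u t, v t, w t) (hr1 t) (hr2 t)
  -- symmetry about t = 0
  have hg1 := vec_sol (reflected_sol hsol 0)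
  have heq0 : ((x 0, y 0, z 0, u 0, v 0, w 0) : E6)
      = ((x (0 - 0), -y (0 - 0), z (0 - 0), -u (0 - 0), v (0 - 0), -w (0 - 0)) : E6) := by
    norm_num [hy0, hu0, hw0]
  have hA : ∀ s : ℝ, ((x s, y s, z s, u s, v s, w s) : E6)
      = ((x (0 - s), -y (0 - s), z (0 - s), -u (0 - s), v (0 - s), -w (0 - s)) : E6) :=
    ODE_uniq hX hg1 hFX (t₀ := 0) heq0
  -- symmetry about t = T/2
  have hg2 := vec_sol (reflected_sol hsol T)
  have heqh : ((x (T/2), y (T/2), z (T/2), u (T/2), v (T/2), w (T/2)) : E6)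
      = ((x (T - T/2), -y (T - T/2), z (T - T/2), -u (T - T/2), v (T - T/2), -w (T - T/2)) : E6) := by
    have e : T - T/2 = T/2 := by ring
    rw [e]
    simp [hyh, huh, hwh]
  have hB : ∀ s : ℝ, ((x s, y s, z s, u s, v s, w s) : E6)
      = ((x (T - s), -y (T - s), z (T - s), -u (T - s), v (T - s), -w (T - s)) : E6) :=
    ODE_uniq hX hg2 hFX (t₀ := T/2) heqh
  intro t
  have key : ((x (t+T), y (t+T), z (t+T), u (t+T), v (t+T), w (t+T)) : E6)
      = ((x t, y t, z t, u t, v t, w t) : E6) := by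
    have e : T - (t + T) = 0 - t := by ring
    rw [hB (t + T), e]
    exact (hA t).symm
  simp only [Prod.mk.injEq] at key
  exact ⟨key.1, key.2.1, key.2.2.1, key.2.2.2.1, key.2.2.2.2.1, key.2.2.2.2.2⟩
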